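/- Let x ≥ 4 be an even integer. Let G be the simple graph on vertex set Z_x × Z_6 whose edge set consists of the edges {(k, j), (k+1, j)} for all k ∈ Z_x and j ∈ Z_6, together with, for each k ∈ Z_x, the three inside edges {(k,0),(k,2)}, {(k,1),(k,4)}, {(k,3),(k,5)}. Then the edge set of G can be partitioned into one C_{2x}-factor and one perfect matching of G. -/

import Mathlib

def pp : ZMod 6 → ZMod 6 := ![2, 4, 0, 5, 1, 3]

lemma pp_invol (j : ZMod 6) : pp (pp j) = j := by revert j; decide
lemma pp_ne (j : ZMod 6) : pp j ≠ j := by revert j; decide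
lemma pp_cases (j : ZMod 6) : j = 0 ∨ j = 1 ∨ j = 2 ∨ j = 3 ∨ j = 4 ∨ j = 5 := by
  revert j; decide
lemma pp0 : pp 0 = 2 := by decide
lemma pp1 : pp 1 = 4 := by decide
lemma pp2 : pp 2 = 0 := by decide
lemma pp3 : pp 3 = 5 := by decide
lemma pp4 : pp 4 = 1 := by decide
lemma pp5 : pp 5 = 3 := by decide

def E1 (x : ℕ) : Set (Sym2 (ZMod x × ZMod 6)) :=
  {e | ∃ (k : ZMod x) (j : ZMod 6), k ≠ 0 ∧ e = s((k, j), (k + 1, j))} ∪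
  {e | ∃ j : ZMod 6, e = s(((0 : ZMod x), j), ((0 : ZMod x), pp j)) ∨
        e = s(((1 : ZMod x), j), ((1 : ZMod x), pp j))}

def E2 (x : ℕ) : Set (Sym2 (ZMod x × ZMod 6)) :=
  {e | ∃ j : ZMod 6, e = s(((0 : ZMod x), j), ((1 : ZMod x), j))} ∪
  {e | ∃ (k : ZMod x) (j : ZMod 6), k ≠ 0 ∧ k ≠ 1 ∧ e = s((k, j), (k, pp j))}

lemma one_ne (x : ℕ) (hx : 4 ≤ x) : (1 : ZMod x) ≠ 0 := by
  haveI : NeZero x := ⟨by omega⟩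
  intro h
  have : ((1 : ℕ) : ZMod x) = 0 := by exact_mod_cast h
  rw [ZMod.natCast_eq_zero_iff] at this
  exact absurd (Nat.le_of_dvd (by norm_num) this) (by omega)

lemma two_ne (x : ℕ) (hx : 4 ≤ x) : (2 : ZMod x) ≠ 0 := by
  haveI : NeZero x := ⟨by omega⟩
  intro h
  have : ((2 : ℕ) : ZMod x) = 0 := by exact_mod_cast h
  rw [ZMod.natCast_eq_zero_iff] at this
  exact absurd (Nat.le_of_dvd (by norm_num) this) (by omega)

lemma mem_E1_iff (x : ℕ) (a b : ZMod x × ZMod 6) :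
    s(a, b) ∈ E1 x ↔
      (a.2 = b.2 ∧ (a.1 ≠ 0 ∧ b.1 = a.1 + 1 ∨ b.1 ≠ 0 ∧ a.1 = b.1 + 1)) ∨
      (a.1 = b.1 ∧ (a.1 = 0 ∨ a.1 = 1) ∧ b.2 = pp a.2) := by
  obtain ⟨a1, a2⟩ := a
  obtain ⟨b1, b2⟩ := b
  simp only [E1, Set.mem_union, Set.mem_setOf_eq, Sym2.eq, Sym2.rel_iff', Prod.mk.injEq,
    Prod.swap_prod_mk]
  constructor
  · rintro (⟨k, j, hk, ⟨⟨rfl, rfl⟩, rfl, rfl⟩ | ⟨⟨rfl, rfl⟩, rfl, rfl⟩⟩ |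
      ⟨j, (⟨⟨rfl, rfl⟩, rfl, rfl⟩ | ⟨⟨rfl, rfl⟩, rfl, rfl⟩) |
        ⟨⟨rfl, rfl⟩, rfl, rfl⟩ | ⟨⟨rfl, rfl⟩, rfl, rfl⟩⟩)
    · exact Or.inl ⟨rfl, Or.inl ⟨hk, rfl⟩⟩
    · exact Or.inl ⟨rfl, Or.inr ⟨hk, rfl⟩⟩
    · exact Or.inr (by simp)
    · exact Or.inr ⟨rfl, Or.inl rfl, (pp_invol _).symm⟩
    · exact Or.inr (by simp)
    · exact Or.inr ⟨rfl, Or.inr rfl, (pp_invol _).symm⟩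
  · rintro (⟨rfl, ⟨h0, rfl⟩ | ⟨h0, rfl⟩⟩ | ⟨rfl, rfl | rfl, rfl⟩)
    · exact Or.inl ⟨a1, a2, h0, Or.inl ⟨⟨rfl, rfl⟩, rfl, rfl⟩⟩
    · exact Or.inl ⟨b1, a2, h0, Or.inr ⟨⟨rfl, rfl⟩, rfl, rfl⟩⟩
    · exact Or.inr ⟨a2, Or.inl (Or.inl ⟨⟨rfl, rfl⟩, rfl, rfl⟩)⟩
    · exact Or.inr ⟨a2, Or.inr (Or.inl ⟨⟨rfl, rfl⟩, rfl, rfl⟩)⟩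

lemma mem_E2_iff (x : ℕ) (a b : ZMod x × ZMod 6) :
    s(a, b) ∈ E2 x ↔
      (a.2 = b.2 ∧ (a.1 = 0 ∧ b.1 = 1 ∨ a.1 = 1 ∧ b.1 = 0)) ∨
      (a.1 = b.1 ∧ a.1 ≠ 0 ∧ a.1 ≠ 1 ∧ b.2 = pp a.2) := by
  obtain ⟨a1, a2⟩ := a
  obtain ⟨b1, b2⟩ := b
  simp only [E2, Set.mem_union, Set.mem_setOf_eq, Sym2.eq, Sym2.rel_iff', Prod.mk.injEq,
    Prod.swap_prod_mk]
  constructor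
  · rintro (⟨j, ⟨⟨rfl, rfl⟩, rfl, rfl⟩ | ⟨⟨rfl, rfl⟩, rfl, rfl⟩⟩ |
      ⟨k, j, hk0, hk1, ⟨⟨rfl, rfl⟩, rfl, rfl⟩ | ⟨⟨rfl, rfl⟩, rfl, rfl⟩⟩)
    · exact Or.inl ⟨rfl, Or.inl ⟨rfl, rfl⟩⟩
    · exact Or.inl ⟨rfl, Or.inr ⟨rfl, rfl⟩⟩
    · exact Or.inr ⟨rfl, hk0, hk1, rfl⟩
    · exact Or.inr ⟨rfl, hk0, hk1, (pp_invol _).symm⟩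
  · rintro (⟨rfl, ⟨rfl, rfl⟩ | ⟨rfl, rfl⟩⟩ | ⟨rfl, hk0, hk1, rfl⟩)
    · exact Or.inl ⟨a2, Or.inl ⟨⟨rfl, rfl⟩, rfl, rfl⟩⟩
    · exact Or.inl ⟨a2, Or.inr ⟨⟨rfl, rfl⟩, rfl, rfl⟩⟩
    · exact Or.inr ⟨a1, a2, hk0, hk1, Or.inl ⟨⟨rfl, rfl⟩, rfl, rfl⟩⟩

lemma adj1_iff (x : ℕ) (hx : 4 ≤ x) (a b : ZMod x × ZMod 6) :
    (SimpleGraph.fromEdgeSet (E1 x)).Adj a b ↔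
      (a.2 = b.2 ∧ (a.1 ≠ 0 ∧ b.1 = a.1 + 1 ∨ b.1 ≠ 0 ∧ a.1 = b.1 + 1)) ∨
      (a.1 = b.1 ∧ (a.1 = 0 ∨ a.1 = 1) ∧ b.2 = pp a.2) := by
  rw [SimpleGraph.fromEdgeSet_adj, mem_E1_iff]
  constructor
  · exact fun h => h.1
  · intro h
    refine ⟨h, ?_⟩
    rcases h with ⟨h2, ⟨h0, h1⟩ | ⟨h0, h1⟩⟩ | ⟨h1, _, h2⟩
    · intro he; rw [he] at h1; exact one_ne x hx (left_eq_add.mp h1)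
    · intro he; rw [he] at h1; exact one_ne x hx (left_eq_add.mp h1)
    · intro he; rw [he] at h2; exact pp_ne b.2 h2.symm

lemma adj2_iff (x : ℕ) (hx : 4 ≤ x) (a b : ZMod x × ZMod 6) :
    (SimpleGraph.fromEdgeSet (E2 x)).Adj a b ↔
      (a.2 = b.2 ∧ (a.1 = 0 ∧ b.1 = 1 ∨ a.1 = 1 ∧ b.1 = 0)) ∨
      (a.1 = b.1 ∧ a.1 ≠ 0 ∧ a.1 ≠ 1 ∧ b.2 = pp a.2) := by
  rw [SimpleGraph.fromEdgeSet_adj, mem_E2_iff]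
  constructor
  · exact fun h => h.1
  · intro h
    refine ⟨h, ?_⟩
    rcases h with ⟨h2, ⟨h0, h1⟩ | ⟨h0, h1⟩⟩ | ⟨h1, _, _, h2⟩
    · intro he; rw [he] at h0; exact one_ne x hx (h1.symm.trans h0)
    · intro he; rw [he] at h0; exact one_ne x hx (h0.symm.trans h1)
    · intro he; rw [he] at h2; exact pp_ne b.2 h2.symm

lemma disj12 (x : ℕ) (hx : 4 ≤ x) : Disjoint (E1 x) (E2 x) := by
  rw [Set.disjoint_left]
  intro e h1 h2
  induction e using Sym2.ind with
  | _ a b =>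
  rw [mem_E1_iff] at h1
  rw [mem_E2_iff] at h2
  rcases h1 with ⟨g2, ⟨g0, g1⟩ | ⟨g0, g1⟩⟩ | ⟨g1, g0, g2⟩
  · rcases h2 with ⟨_, ⟨f0, f1⟩ | ⟨f0, f1⟩⟩ | ⟨f1, f0, _⟩
    · exact g0 f0
    · rw [f0, f1] at g1
      exact two_ne x hx (by linear_combination g1.symm)
    · rw [← f1] at g1; exact one_ne x hx (left_eq_add.mp g1)
  · rcases h2 with ⟨_, ⟨f0, f1⟩ | ⟨f0, f1⟩⟩ | ⟨f1, _, f2, _⟩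
    · rw [f0, f1] at g1
      exact two_ne x hx (by linear_combination g1.symm)
    · exact g0 f1
    · rw [f1] at g1; exact one_ne x hx (left_eq_add.mp g1)
  · rcases h2 with ⟨f2, ⟨f0, f1⟩ | ⟨f0, f1⟩⟩ | ⟨_, f0, f1, _⟩
    · rw [f2] at g2; exact pp_ne b.2 g2.symm
    · rw [f2] at g2; exact pp_ne b.2 g2.symm
    · rcases g0 with g0 | g0
      · exact f0 g0
      · exact f1 g0

lemma union12 (x : ℕ) (hx : 4 ≤ x) :
    E1 x ∪ E2 x =
      (SimpleGraph.fromEdgeSet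
        ({e : Sym2 (ZMod x × ZMod 6) |
            ∃ (k : ZMod x) (j : ZMod 6), e = s((k, j), (k + 1, j))} ∪
         {e : Sym2 (ZMod x × ZMod 6) |
            ∃ k : ZMod x,
              e = s((k, 0), (k, 2)) ∨ e = s((k, 1), (k, 4)) ∨ e = s((k, 3), (k, 5))})).edgeSet := by
  rw [SimpleGraph.edgeSet_fromEdgeSet]
  ext e
  induction e using Sym2.ind with
  | _ a b =>
  obtain ⟨a1, a2⟩ := a
  obtain ⟨b1, b2⟩ := b
  rw [Set.mem_union, mem_E1_iff, mem_E2_iff, Set.mem_diff, Set.mem_union]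
  simp only [Set.mem_setOf_eq, Sym2.eq, Sym2.rel_iff', Prod.mk.injEq, Prod.swap_prod_mk,
    Sym2.mk_isDiag_iff]
  constructor
  · rintro ((⟨rfl, ⟨h0, rfl⟩ | ⟨h0, rfl⟩⟩ | ⟨rfl, g0, rfl⟩) |
      (⟨rfl, ⟨rfl, rfl⟩ | ⟨rfl, rfl⟩⟩ | ⟨rfl, h0, h1, rfl⟩))
    · refine ⟨Or.inl ⟨a1, a2, Or.inl ⟨⟨rfl, rfl⟩, rfl, rfl⟩⟩, ?_⟩
      intro h
      exact one_ne x hx (left_eq_add.mp (congrArg Prod.fst h))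
    · refine ⟨Or.inl ⟨b1, a2, Or.inr ⟨⟨rfl, rfl⟩, rfl, rfl⟩⟩, ?_⟩
      intro h
      exact one_ne x hx (left_eq_add.mp (congrArg Prod.fst h).symm)
    · refine ⟨Or.inr ⟨a1, ?_⟩, fun h => pp_ne a2 (congrArg Prod.snd h).symm⟩
      rcases pp_cases a2 with rfl | rfl | rfl | rfl | rfl | rfl <;>
        simp [pp0, pp1, pp2, pp3, pp4, pp5]
    · refine ⟨Or.inl ⟨0, a2, Or.inl ⟨⟨rfl, rfl⟩, ?_, rfl⟩⟩, ?_⟩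
      · exact (zero_add 1).symm
      · intro h
        exact one_ne x hx (congrArg Prod.fst h).symm
    · refine ⟨Or.inl ⟨0, a2, Or.inr ⟨⟨?_, rfl⟩, rfl, rfl⟩⟩, ?_⟩
      · exact (zero_add 1).symm
      · intro h
        exact one_ne x hx (congrArg Prod.fst h)
    · refine ⟨Or.inr ⟨a1, ?_⟩, fun h => pp_ne a2 (congrArg Prod.snd h).symm⟩
      rcases pp_cases a2 with rfl | rfl | rfl | rfl | rfl | rfl <;>
        simp [pp0, pp1, pp2, pp3, pp4, pp5]
  · rintro ⟨⟨k, j, ⟨⟨rfl, rfl⟩, rfl, rfl⟩ | ⟨⟨rfl, rfl⟩, rfl, rfl⟩⟩ | hin, hne⟩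
    · by_cases h0 : a1 = 0
      · subst h0
        exact Or.inr (Or.inl ⟨rfl, Or.inl ⟨rfl, zero_add 1⟩⟩)
      · exact Or.inl (Or.inl ⟨rfl, Or.inl ⟨h0, rfl⟩⟩)
    · by_cases h0 : b1 = 0
      · subst h0
        exact Or.inr (Or.inl ⟨rfl, Or.inr ⟨zero_add 1, rfl⟩⟩)
      · exact Or.inl (Or.inl ⟨rfl, Or.inr ⟨h0, rfl⟩⟩)
    · have hin' : a1 = b1 ∧ b2 = pp a2 := by
        rcases hin with ⟨k, (⟨⟨rfl, rfl⟩, rfl, rfl⟩ | ⟨⟨rfl, rfl⟩, rfl, rfl⟩) |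
          (⟨⟨rfl, rfl⟩, rfl, rfl⟩ | ⟨⟨rfl, rfl⟩, rfl, rfl⟩) |
          (⟨⟨rfl, rfl⟩, rfl, rfl⟩ | ⟨⟨rfl, rfl⟩, rfl, rfl⟩)⟩ <;>
          exact ⟨rfl, by decide⟩
      obtain ⟨rfl, rfl⟩ := hin'
      by_cases h0 : a1 = 0
      · exact Or.inl (Or.inr ⟨rfl, Or.inl h0, rfl⟩)
      by_cases h1 : a1 = 1
      · exact Or.inl (Or.inr ⟨rfl, Or.inr h1, rfl⟩)
      · exact Or.inr (Or.inr ⟨rfl, h0, h1, rfl⟩)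

lemma adj_snd (x : ℕ) (hx : 4 ≤ x) {u v : ZMod x × ZMod 6}
    (h : (SimpleGraph.fromEdgeSet (E1 x)).Adj u v) : v.2 = u.2 ∨ v.2 = pp u.2 := by
  rw [adj1_iff x hx] at h
  rcases h with ⟨h2, _⟩ | ⟨_, _, h2⟩
  · exact Or.inl h2.symm
  · exact Or.inr h2

lemma reach_snd (x : ℕ) (hx : 4 ≤ x) {u v : ZMod x × ZMod 6}
    (h : (SimpleGraph.fromEdgeSet (E1 x)).Reachable u v) : v.2 = u.2 ∨ v.2 = pp u.2 := by
  obtain ⟨w⟩ := h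
  induction w with
  | nil => exact Or.inl rfl
  | cons h p ih =>
    rcases adj_snd x hx h with h1 | h1 <;> rcases ih with h2 | h2
    · exact Or.inl (h2.trans h1)
    · exact Or.inr (h2.trans (by rw [h1]))
    · exact Or.inr (h2.trans (by rw [h1]))
    · exact Or.inl (h2.trans (by rw [h1, pp_invol]))

lemma adjA (x : ℕ) (hx : 4 ≤ x) (k : ZMod x) (c : ZMod 6) (hk : k ≠ 0) :
    (SimpleGraph.fromEdgeSet (E1 x)).Adj (k, c) (k + 1, c) :=
  (adj1_iff x hx _ _).2 (Or.inl ⟨rfl, Or.inl ⟨hk, rfl⟩⟩)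

lemma adjB1 (x : ℕ) (hx : 4 ≤ x) (c : ZMod 6) :
    (SimpleGraph.fromEdgeSet (E1 x)).Adj (1, c) (1, pp c) :=
  (adj1_iff x hx _ _).2 (Or.inr ⟨rfl, Or.inr rfl, rfl⟩)

lemma reach_aux (x : ℕ) (hx : 4 ≤ x) (c : ZMod 6) (n : ℕ) :
    (SimpleGraph.fromEdgeSet (E1 x)).Reachable (1, c) (1 + (n : ZMod x), c) ∧
    (SimpleGraph.fromEdgeSet (E1 x)).Reachable (1, c) (1 + (n : ZMod x), pp c) := by
  induction n with
  | zero =>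
    simp only [Nat.cast_zero, add_zero]
    exact ⟨SimpleGraph.Reachable.refl _, (adjB1 x hx c).reachable⟩
  | succ n ih =>
    have hcast : (1 + ((n + 1 : ℕ) : ZMod x)) = (1 + (n : ℕ)) + 1 := by push_cast; ring
    rw [hcast]
    by_cases h0 : (1 + (n : ℕ) : ZMod x) = 0
    · rw [h0, zero_add]
      exact ⟨SimpleGraph.Reachable.refl _, (adjB1 x hx c).reachable⟩
    · exact ⟨ih.1.trans (adjA x hx _ c h0).reachable,
        ih.2.trans (adjA x hx _ (pp c) h0).reachable⟩

lemma reach_from_one (x : ℕ) (hx : 4 ≤ x) (c : ZMod 6) (k : ZMod x) :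
    (SimpleGraph.fromEdgeSet (E1 x)).Reachable (1, c) (k, c) ∧
    (SimpleGraph.fromEdgeSet (E1 x)).Reachable (1, c) (k, pp c) := by
  haveI : NeZero x := ⟨by omega⟩
  have h := reach_aux x hx c (k - 1).val
  rwa [ZMod.natCast_zmod_val, show (1 : ZMod x) + (k - 1) = k from by ring] at h

lemma reachSet (x : ℕ) (hx : 4 ≤ x) (a : ZMod x) (j : ZMod 6) :
    {b | (SimpleGraph.fromEdgeSet (E1 x)).Reachable (a, j) b} =
      (Set.univ : Set (ZMod x)) ×ˢ ({j, pp j} : Set (ZMod 6)) := by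
  ext ⟨b1, b2⟩
  simp only [Set.mem_setOf_eq, Set.mem_prod, Set.mem_univ, true_and, Set.mem_insert_iff,
    Set.mem_singleton_iff]
  constructor
  · intro h; exact reach_snd x hx h
  · rintro (h | h)
    · rw [h]; exact ((reach_from_one x hx j a).1).symm.trans ((reach_from_one x hx j b1).1)
    · rw [h]; exact ((reach_from_one x hx j a).1).symm.trans ((reach_from_one x hx j b1).2)

lemma prodcard (x : ℕ) (hx : 4 ≤ x) (j : ZMod 6) :
    ((Set.univ : Set (ZMod x)) ×ˢ ({j, pp j} : Set (ZMod 6))).ncard = 2 * x := by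
  haveI : NeZero x := ⟨by omega⟩
  have h : ((Set.univ : Set (ZMod x)) ×ˢ ({j, pp j} : Set (ZMod 6))) =
      ↑((Finset.univ : Finset (ZMod x)) ×ˢ ({j, pp j} : Finset (ZMod 6))) := by
    rw [Finset.coe_product]
    simp
  rw [h, Set.ncard_coe_finset, Finset.card_product, Finset.card_univ, ZMod.card,
    Finset.card_pair (Ne.symm (pp_ne j))]
  ring

lemma N1_zero (x : ℕ) (hx : 4 ≤ x) (j : ZMod 6) :
    {b | (SimpleGraph.fromEdgeSet (E1 x)).Adj ((0 : ZMod x), j) b} =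
      {((-1 : ZMod x), j), ((0 : ZMod x), pp j)} := by
  ext ⟨b1, b2⟩
  simp only [Set.mem_setOf_eq, adj1_iff x hx, Set.mem_insert_iff, Set.mem_singleton_iff,
    Prod.mk.injEq]
  constructor
  · rintro (⟨rfl, ⟨h0, rfl⟩ | ⟨h0, h1⟩⟩ | ⟨rfl, -, rfl⟩)
    · exact absurd rfl h0
    · exact Or.inl ⟨eq_neg_of_add_eq_zero_left h1.symm, rfl⟩
    · exact Or.inr ⟨rfl, rfl⟩
  · rintro (⟨rfl, rfl⟩ | ⟨rfl, rfl⟩)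
    · exact Or.inl ⟨rfl, Or.inr ⟨neg_ne_zero.2 (one_ne x hx), by ring⟩⟩
    · exact Or.inr (by simp)

lemma N1_one (x : ℕ) (hx : 4 ≤ x) (j : ZMod 6) :
    {b | (SimpleGraph.fromEdgeSet (E1 x)).Adj ((1 : ZMod x), j) b} =
      {((2 : ZMod x), j), ((1 : ZMod x), pp j)} := by
  ext ⟨b1, b2⟩
  simp only [Set.mem_setOf_eq, adj1_iff x hx, Set.mem_insert_iff, Set.mem_singleton_iff,
    Prod.mk.injEq]
  constructor
  · rintro (⟨rfl, ⟨-, rfl⟩ | ⟨h0, h1⟩⟩ | ⟨rfl, -, rfl⟩)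
    · exact Or.inl ⟨one_add_one_eq_two, rfl⟩
    · exact absurd (by linear_combination h1.symm) h0
    · exact Or.inr ⟨rfl, rfl⟩
  · rintro (⟨rfl, rfl⟩ | ⟨rfl, rfl⟩)
    · exact Or.inl ⟨rfl, Or.inl ⟨one_ne x hx, one_add_one_eq_two.symm⟩⟩
    · exact Or.inr (by simp)

lemma N1_mid (x : ℕ) (hx : 4 ≤ x) (k : ZMod x) (j : ZMod 6) (hk0 : k ≠ 0) (hk1 : k ≠ 1) :
    {b | (SimpleGraph.fromEdgeSet (E1 x)).Adj (k, j) b} =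
      {(k + 1, j), (k - 1, j)} := by
  ext ⟨b1, b2⟩
  simp only [Set.mem_setOf_eq, adj1_iff x hx, Set.mem_insert_iff, Set.mem_singleton_iff,
    Prod.mk.injEq]
  constructor
  · rintro (⟨rfl, ⟨-, rfl⟩ | ⟨h0, h1⟩⟩ | ⟨rfl, (h | h), rfl⟩)
    · exact Or.inl ⟨rfl, rfl⟩
    · exact Or.inr ⟨by linear_combination h1.symm, rfl⟩
    · exact absurd h hk0
    · exact absurd h hk1
  · rintro (⟨rfl, rfl⟩ | ⟨rfl, rfl⟩)
    · exact Or.inl ⟨rfl, Or.inl ⟨hk0, rfl⟩⟩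
    · exact Or.inl ⟨rfl, Or.inr ⟨sub_ne_zero.2 hk1, by ring⟩⟩

lemma N2_zero (x : ℕ) (hx : 4 ≤ x) (j : ZMod 6) :
    {b | (SimpleGraph.fromEdgeSet (E2 x)).Adj ((0 : ZMod x), j) b} = {((1 : ZMod x), j)} := by
  ext ⟨b1, b2⟩
  simp only [Set.mem_setOf_eq, adj2_iff x hx, Set.mem_singleton_iff, Prod.mk.injEq]
  constructor
  · rintro (⟨rfl, ⟨-, rfl⟩ | ⟨h, -⟩⟩ | ⟨-, h, -⟩)
    · exact ⟨rfl, rfl⟩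
    · exact absurd h.symm (one_ne x hx)
    · exact absurd rfl h
  · rintro ⟨rfl, rfl⟩
    exact Or.inl (by simp)

lemma N2_one (x : ℕ) (hx : 4 ≤ x) (j : ZMod 6) :
    {b | (SimpleGraph.fromEdgeSet (E2 x)).Adj ((1 : ZMod x), j) b} = {((0 : ZMod x), j)} := by
  ext ⟨b1, b2⟩
  simp only [Set.mem_setOf_eq, adj2_iff x hx, Set.mem_singleton_iff, Prod.mk.injEq]
  constructor
  · rintro (⟨rfl, ⟨h, -⟩ | ⟨-, rfl⟩⟩ | ⟨-, -, h, -⟩)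
    · exact absurd h (one_ne x hx)
    · exact ⟨rfl, rfl⟩
    · exact absurd rfl h
  · rintro ⟨rfl, rfl⟩
    exact Or.inl (by simp)

lemma N2_mid (x : ℕ) (hx : 4 ≤ x) (k : ZMod x) (j : ZMod 6) (hk0 : k ≠ 0) (hk1 : k ≠ 1) :
    {b | (SimpleGraph.fromEdgeSet (E2 x)).Adj (k, j) b} = {(k, pp j)} := by
  ext ⟨b1, b2⟩
  simp only [Set.mem_setOf_eq, adj2_iff x hx, Set.mem_singleton_iff, Prod.mk.injEq]
  constructor
  · rintro (⟨rfl, ⟨h, -⟩ | ⟨h, -⟩⟩ | ⟨rfl, -, -, rfl⟩)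
    · exact absurd h hk0
    · exact absurd h hk1
    · exact ⟨rfl, rfl⟩
  · rintro ⟨rfl, rfl⟩
    exact Or.inr ⟨rfl, hk0, hk1, rfl⟩

/-- `E` is a `C_m`-factor: in the graph with edge set `E`, every vertex has exactly
two neighbours and every connected component has exactly `m` vertices, i.e. the
graph is a spanning 2-regular graph all of whose components are cycles of length `m`. -/
def IsCycleFactor {V : Type*} (E : Set (Sym2 V)) (m : ℕ) : Prop :=
  (∀ a : V, {b | (SimpleGraph.fromEdgeSet E).Adj a b}.ncard = 2) ∧
  (∀ a : V, {b | (SimpleGraph.fromEdgeSet E).Reachable a b}.ncard = m)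

/-- `E` is a perfect matching: every vertex lies on exactly one edge of `E`. -/
def IsPerfectMatchingSet {V : Type*} (E : Set (Sym2 V)) : Prop :=
  ∀ a : V, {b | (SimpleGraph.fromEdgeSet E).Adj a b}.ncard = 1

theorem gDelta_zero_plus_f5 (x : ℕ) (hx : 4 ≤ x) (hev : Even x)
    (G : SimpleGraph (ZMod x × ZMod 6))
    (hG : G = SimpleGraph.fromEdgeSet
      ({e : Sym2 (ZMod x × ZMod 6) |
          ∃ (k : ZMod x) (j : ZMod 6), e = s((k, j), (k + 1, j))} ∪
       {e : Sym2 (ZMod x × ZMod 6) |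
          ∃ k : ZMod x,
            e = s((k, 0), (k, 2)) ∨ e = s((k, 1), (k, 4)) ∨ e = s((k, 3), (k, 5))})) :
    ∃ E₁ E₂ : Set (Sym2 (ZMod x × ZMod 6)),
      Disjoint E₁ E₂ ∧ E₁ ∪ E₂ = G.edgeSet ∧
      IsCycleFactor E₁ (2 * x) ∧ IsPerfectMatchingSet E₂ := by
  refine ⟨E1 x, E2 x, disj12 x hx, hG ▸ union12 x hx, ⟨?_, ?_⟩, ?_⟩
  · rintro ⟨k, j⟩
    by_cases hk0 : k = 0
    · subst hk0
      rw [N1_zero x hx j]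
      refine Set.ncard_pair fun h => ?_
      exact neg_ne_zero.2 (one_ne x hx) (congrArg Prod.fst h)
    by_cases hk1 : k = 1
    · subst hk1
      rw [N1_one x hx j]
      refine Set.ncard_pair fun h => ?_
      have h1 : (2 : ZMod x) = 1 := congrArg Prod.fst h
      exact one_ne x hx (by linear_combination h1)
    · rw [N1_mid x hx k j hk0 hk1]
      refine Set.ncard_pair fun h => ?_
      have h1 : k + 1 = k - 1 := congrArg Prod.fst h
      exact two_ne x hx (by linear_combination h1)
  · rintro ⟨k, j⟩
    rw [reachSet x hx k j, prodcard x hx j]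
  · rintro ⟨k, j⟩
    by_cases hk0 : k = 0
    · subst hk0; rw [N2_zero x hx j]; exact Set.ncard_singleton _
    by_cases hk1 : k = 1
    · subst hk1; rw [N2_one x hx j]; exact Set.ncard_singleton _
    · rw [N2_mid x hx k j hk0 hk1]; exact Set.ncard_singleton _
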